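/- Let ε ~ N(0, σ²) and for α > 0 define ρ''(ε) = (α+1)(2π)^{-α/2} σ^{-α-2} (1 - α ε²/σ²) exp(-α ε²/(2σ²)). Then E[ρ''(ε)] = (α+1)^{-1/2} (2π)^{-α/2} σ^{-α-2}. -/

import Mathlib

open MeasureTheory Real

lemma integral_sq_mul_exp_neg_mul_sq {b : ℝ} (hb : 0 < b) :
    ∫ x : ℝ, x ^ 2 * Real.exp (-b * x ^ 2) = Real.sqrt (π / b) / (2 * b) := by
  have hint2 : Integrable fun x : ℝ => x ^ 2 * Real.exp (-b * x ^ 2) := by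
    have := integrable_rpow_mul_exp_neg_mul_sq hb (s := 2) (by norm_num)
    simpa [Real.rpow_two] using this
  have hint0 : Integrable fun x : ℝ => Real.exp (-b * x ^ 2) :=
    integrable_exp_neg_mul_sq hb
  have hint1 : Integrable fun x : ℝ => x * Real.exp (-b * x ^ 2) :=
    integrable_mul_exp_neg_mul_sq hb
  have hderiv : ∀ x : ℝ, HasDerivAt (fun x : ℝ => x * Real.exp (-b * x ^ 2))
      (Real.exp (-b * x ^ 2) - 2 * b * (x ^ 2 * Real.exp (-b * x ^ 2))) x := by
    intro x
    have h1 : HasDerivAt (fun x : ℝ => -b * x ^ 2) (-b * (2 * x)) x := by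
      simpa using ((hasDerivAt_pow 2 x).const_mul (-b))
    have h2 : HasDerivAt (fun x : ℝ => Real.exp (-b * x ^ 2))
        (Real.exp (-b * x ^ 2) * (-b * (2 * x))) x := h1.exp
    have h3 : HasDerivAt (fun y : ℝ => id y * Real.exp (-b * y ^ 2)) _ x := (hasDerivAt_id x).mul h2
    simp only [id_eq] at h3
    convert h3 using 1
    ring
  have hf'int : Integrable fun x : ℝ =>
      Real.exp (-b * x ^ 2) - 2 * b * (x ^ 2 * Real.exp (-b * x ^ 2)) :=
    hint0.sub (hint2.const_mul _)
  have hzero := integral_eq_zero_of_hasDerivAt_of_integrable hderiv hf'int hint1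
  rw [integral_sub hint0 (hint2.const_mul _), integral_const_mul,
    integral_gaussian] at hzero
  have hb' : (2 : ℝ) * b ≠ 0 := by positivity
  field_simp at hzero ⊢
  linarith

/-- For `ε ~ N(0, σ²)` and
`ρ''(z) = (α+1)(2π)^{-α/2} σ^{-α-2} (1 - α z²/σ²) exp(-α z²/(2σ²))`,
`E[ρ''(ε)] = (α+1)^{-1/2} (2π)^{-α/2} σ^{-α-2}`. -/
theorem bhhj_second_deriv_mean (σ α : ℝ) (hσ : 0 < σ) (hα : 0 < α) :
    (∫ z : ℝ,
      ((α + 1) * (2 * π) ^ (-α / 2) * σ ^ (-α - 2) * (1 - α * z ^ 2 / σ ^ 2) *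
          Real.exp (-α * z ^ 2 / (2 * σ ^ 2))) *
        ((2 * π * σ ^ 2) ^ (-(1 : ℝ) / 2) * Real.exp (-z ^ 2 / (2 * σ ^ 2))))
      = (α + 1) ^ (-(1 : ℝ) / 2) * (2 * π) ^ (-α / 2) * σ ^ (-α - 2) := by
  set b : ℝ := (α + 1) / (2 * σ ^ 2) with hb_def
  have hb : 0 < b := by positivity
  set C : ℝ := (α + 1) * (2 * π) ^ (-α / 2) * σ ^ (-α - 2) * (2 * π * σ ^ 2) ^ (-(1 : ℝ) / 2)
    with hC_def
  have hexp : ∀ z : ℝ, Real.exp (-α * z ^ 2 / (2 * σ ^ 2)) * Real.exp (-z ^ 2 / (2 * σ ^ 2))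
      = Real.exp (-b * z ^ 2) := by
    intro z
    rw [← Real.exp_add]
    congr 1
    rw [hb_def]
    field_simp
    ring
  have hrw : ∀ z : ℝ,
      ((α + 1) * (2 * π) ^ (-α / 2) * σ ^ (-α - 2) * (1 - α * z ^ 2 / σ ^ 2) *
          Real.exp (-α * z ^ 2 / (2 * σ ^ 2))) *
        ((2 * π * σ ^ 2) ^ (-(1 : ℝ) / 2) * Real.exp (-z ^ 2 / (2 * σ ^ 2)))
      = C * Real.exp (-b * z ^ 2) - (C * (α / σ ^ 2)) * (z ^ 2 * Real.exp (-b * z ^ 2)) := by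
    intro z
    rw [← hexp z, hC_def]
    ring
  rw [integral_congr_ae (Filter.Eventually.of_forall hrw)]
  have hint0 : Integrable fun x : ℝ => Real.exp (-b * x ^ 2) := integrable_exp_neg_mul_sq hb
  have hint2 : Integrable fun x : ℝ => x ^ 2 * Real.exp (-b * x ^ 2) := by
    have := integrable_rpow_mul_exp_neg_mul_sq hb (s := 2) (by norm_num)
    simpa [Real.rpow_two] using this
  rw [integral_sub (hint0.const_mul _) (hint2.const_mul _), integral_const_mul,
    integral_const_mul, integral_gaussian, integral_sq_mul_exp_neg_mul_sq hb]
  have hπ : (0 : ℝ) < 2 * π := by positivity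
  have hσ2 : (0 : ℝ) < σ ^ 2 := by positivity
  have hα1 : (0 : ℝ) < α + 1 := by linarith
  -- the integral equals C * √(π/b) / (α+1)
  have key : C * Real.sqrt (π / b) - C * (α / σ ^ 2) * (Real.sqrt (π / b) / (2 * b))
      = C * Real.sqrt (π / b) / (α + 1) := by
    have h1 : α / σ ^ 2 / (2 * b) = α / (α + 1) := by
      rw [hb_def]; field_simp
    have h2 : C * (α / σ ^ 2) * (Real.sqrt (π / b) / (2 * b))
        = C * Real.sqrt (π / b) * (α / (α + 1)) := by
      rw [← h1]; field_simp
    rw [h2]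
    field_simp
    ring
  rw [key]
  -- now compute C * √(π/b) / (α+1)
  have hsqrt : Real.sqrt (π / b) = Real.sqrt (2 * π * σ ^ 2) / Real.sqrt (α + 1) := by
    rw [← Real.sqrt_div (by positivity : (0:ℝ) ≤ 2 * π * σ ^ 2)]
    congr 1
    rw [hb_def]
    field_simp
  have hrpow1 : (2 * π * σ ^ 2) ^ (-(1 : ℝ) / 2) = (Real.sqrt (2 * π * σ ^ 2))⁻¹ := by
    rw [neg_div, Real.rpow_neg (by positivity), Real.sqrt_eq_rpow]
  have hrpow2 : (α + 1) ^ (-(1 : ℝ) / 2) = (Real.sqrt (α + 1))⁻¹ := by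
    rw [neg_div, Real.rpow_neg (by positivity), Real.sqrt_eq_rpow]
  have hs1 : (0 : ℝ) < Real.sqrt (2 * π * σ ^ 2) := Real.sqrt_pos.mpr (by positivity)
  have hs2 : (0 : ℝ) < Real.sqrt (α + 1) := Real.sqrt_pos.mpr hα1
  rw [hsqrt, hC_def, hrpow1, hrpow2]
  field_simp
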